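/- arXiv:1706.07940 — 4 statements merged into one kernel-verified Lean document; each statement's English description precedes it below -/
import Mathlib

section
/- Let p be an odd prime, n ≥ 1, and k an integer coprime to p. Define λ : ℤ/p^n × ℤ/p^n → ℚ/ℤ by λ(a,b) = (k/p^n)·a·b. If there exists an isomorphism Φ : ℤ/p^n → ℤ/p^n with λ(Φ(a), Φ(b)) = -λ(a,b) for all a, b, then p ≡ 1 mod 4. -/
/-- `ℚ/ℤ` as an additive group. -/
abbrev QZ : Type := AddCircle (1 : ℚ)

/-- A linking form on a finitely generated abelian group `H`: a bilinear, symmetric,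
nonsingular pairing into `ℚ/ℤ`.  Nonsingularity is expressed by saying that the adjoint
map `a ↦ (b ↦ λ a b)` is injective and surjective onto `Hom(H, ℚ/ℤ)`. -/
structure LinkingForm (H : Type*) [AddCommGroup H] where
  form : H → H → QZ
  add_left : ∀ a b c : H, form (a + b) c = form a c + form b c
  add_right : ∀ a b c : H, form a (b + c) = form a b + form a c
  symm : ∀ a b : H, form a b = form b a
  adjoint_injective : ∀ a : H, (∀ b : H, form a b = 0) → a = 0
  adjoint_surjective : ∀ f : H →+ QZ, ∃ a : H, ∀ b : H, form a b = f b

/-- The `p`-primary part of an abelian group: elements killed by a power of `p`. -/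
def primaryPart (H : Type*) [AddCommGroup H] (p : ℕ) : AddSubgroup H where
  carrier := {g | ∃ k : ℕ, p ^ k • g = 0}
  zero_mem' := ⟨0, smul_zero _⟩
  add_mem' := by
    rintro a b ⟨k, hk⟩ ⟨l, hl⟩
    refine ⟨k + l, ?_⟩
    have ha : p ^ (k + l) • a = 0 := by rw [pow_add, mul_comm, mul_smul, hk, smul_zero]
    have hb : p ^ (k + l) • b = 0 := by rw [pow_add, mul_smul, hl, smul_zero]
    rw [smul_add, ha, hb, add_zero]
  neg_mem' := by rintro a ⟨k, hk⟩; exact ⟨k, by rw [smul_neg, hk, neg_zero]⟩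

/-- The standard pairing `(a, b) ↦ (k/pⁿ)·a·b` on `ℤ/pⁿ`, with values in `ℚ/ℤ`. -/
noncomputable def stdPairing (p n : ℕ) (k : ℤ) (a b : ZMod (p ^ n)) : QZ :=
  ((((k : ℚ) * (a.val : ℚ) * (b.val : ℚ)) / (p : ℚ) ^ n : ℚ) : QZ)

/-- for `p` an odd prime, if `ℤ/pⁿ` with the pairing `(k/pⁿ)·a·b` admits an
automorphism `Φ` with `λ(Φa, Φb) = -λ(a,b)`, then `p ≡ 1 mod 4`. -/
theorem one_mod_four_of_anti_isometry (p n : ℕ) (hp : p.Prime) (hodd : Odd p) (hn : 1 ≤ n)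
    (k : ℤ) (hk : IsCoprime k (p : ℤ)) (Φ : ZMod (p ^ n) ≃+ ZMod (p ^ n))
    (hΦ : ∀ a b : ZMod (p ^ n),
      stdPairing p n k (Φ a) (Φ b) = - stdPairing p n k a b) :
    p % 4 = 1 := by
  have hpn1 : 1 < p ^ n := Nat.one_lt_pow (by omega) hp.one_lt
  haveI : NeZero (p ^ n) := ⟨by omega⟩
  have h1 := hΦ 1 1
  set v : ℕ := (Φ 1).val with hv
  have hval1 : (1 : ZMod (p ^ n)).val = 1 := ZMod.val_one_eq_one_mod (p ^ n) ▸ Nat.mod_eq_of_lt hpn1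
  rw [eq_neg_iff_add_eq_zero] at h1
  unfold stdPairing at h1
  rw [hval1] at h1
  rw [← AddCircle.coe_add, AddCircle.coe_eq_zero_iff] at h1
  obtain ⟨m, hm⟩ := h1
  have hppos : (0:ℚ) < (p:ℚ) ^ n := by
    have : 0 < p := hp.pos
    positivity
  rw [zsmul_eq_mul, mul_one, ← add_div, eq_comm, div_eq_iff hppos.ne'] at hm
  have hQ : (k : ℚ) * (v : ℚ) * (v : ℚ) + (k : ℚ) = m * (p : ℚ) ^ n := by
    rw [← hm]; ring
  have hZ : k * (v : ℤ) * v + k = m * (p : ℤ) ^ n := by exact_mod_cast hQ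
  have hpdvd : (p : ℤ) ∣ k * ((v : ℤ) ^ 2 + 1) := by
    refine ⟨m * (p : ℤ) ^ (n - 1), ?_⟩
    have hpp : (p : ℤ) * (p : ℤ) ^ (n - 1) = (p : ℤ) ^ n := by
      rw [← pow_succ']; congr 1; omega
    rw [mul_left_comm, hpp, ← hZ]; ring
  have hpv : (p : ℤ) ∣ (v : ℤ) ^ 2 + 1 := hk.symm.dvd_of_dvd_mul_left hpdvd
  haveI : Fact p.Prime := ⟨hp⟩
  have hsq : IsSquare (-1 : ZMod p) := by
    refine ⟨(v : ZMod p), ?_⟩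
    have : ((v : ℤ)^2 + 1 : ZMod p) = 0 := by
      have := (ZMod.intCast_zmod_eq_zero_iff_dvd _ p).mpr hpv
      push_cast at this ⊢
      exact this
    push_cast at this
    linear_combination -this
  have h3 := ZMod.exists_sq_eq_neg_one_iff.mp hsq
  have h2 : p % 2 = 1 := Nat.odd_iff.mp hodd
  omega
end

section
/- Let H be a finite abelian group admitting a linking form λ : H × H → ℚ/ℤ, and let p be a prime with p ≡ 3 mod 4. If there exists a group automorphism Φ of H with λ(Φ(a),Φ(b)) = -λ(a,b) for all a,b ∈ H, then the p-primary part of H is either zero or not cyclic. -/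
/-- The adjoint homomorphism of a linking form, in the left variable. -/
def LinkingForm.leftHom {H : Type*} [AddCommGroup H] (lf : LinkingForm H) (b : H) : H →+ QZ :=
  AddMonoidHom.mk' (fun a => lf.form a b) (fun x y => lf.add_left x y b)

/-- if a finite abelian group with a linking form admits an automorphism `Φ`
with `λ(Φa,Φb) = -λ(a,b)`, then for every prime `p ≡ 3 mod 4` the `p`-primary part is
zero or not cyclic. -/
theorem primaryPart_trivial_or_not_cyclic {H : Type*} [AddCommGroup H] [Finite H]
    (lf : LinkingForm H) (p : ℕ) (hp : p.Prime) (hp4 : p % 4 = 3)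
    (Φ : H ≃+ H) (hΦ : ∀ a b : H, lf.form (Φ a) (Φ b) = - lf.form a b) :
    primaryPart H p = ⊥ ∨ ¬ IsAddCyclic (primaryPart H p) := by
  by_contra hcon
  push_neg at hcon
  obtain ⟨hne, hcyc⟩ := hcon
  classical
  haveI : Fact p.Prime := ⟨hp⟩
  -- bilinearity helpers
  have form_zero_left : ∀ b : H, lf.form 0 b = 0 := fun b =>
    map_zero (lf.leftHom b)
  have form_nsmul_left : ∀ (t : ℕ) (a b : H), lf.form (t • a) b = t • lf.form a b :=
    fun t a b => map_nsmul (lf.leftHom b) t a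
  have form_zsmul_left : ∀ (t : ℤ) (a b : H), lf.form (t • a) b = t • lf.form a b :=
    fun t a b => map_zsmul (lf.leftHom b) t a
  have form_nsmul_right : ∀ (t : ℕ) (a b : H), lf.form a (t • b) = t • lf.form a b := by
    intro t a b; rw [lf.symm, form_nsmul_left, lf.symm]
  have form_zsmul_right : ∀ (t : ℤ) (a b : H), lf.form a (t • b) = t • lf.form a b := by
    intro t a b; rw [lf.symm, form_zsmul_left, lf.symm]
  -- generator of the p-primary part
  obtain ⟨g0, hg0⟩ := hcyc.exists_generator
  have hg0ne : g0 ≠ 0 := by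
    rintro rfl
    apply hne
    ext x
    simp only [AddSubgroup.mem_bot]
    constructor
    · intro hx
      have := hg0 ⟨x, hx⟩
      rw [AddSubgroup.mem_zmultiples_iff] at this
      obtain ⟨k, hk⟩ := this
      have h2 := congrArg Subtype.val hk
      simpa using h2.symm
    · rintro rfl; exact (primaryPart H p).zero_mem
  set g : H := (g0 : H) with hg
  have hgne : g ≠ 0 := fun h => hg0ne (Subtype.ext h)
  have hmem : ∃ k : ℕ, p ^ k • g = 0 := g0.2
  set n : ℕ := Nat.find hmem with hn
  have hng : p ^ n • g = 0 := Nat.find_spec hmem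
  have hn1 : 1 ≤ n := by
    rcases Nat.eq_zero_or_pos n with h0 | h1
    · exfalso; apply hgne; have := hng; rw [h0] at this; simpa using this
    · exact h1
  set c : QZ := lf.form g g with hcdef
  have hc : (p ^ n : ℕ) • c = 0 := by
    rw [← form_nsmul_left, hng, form_zero_left]
  -- every element of the p-primary part is an integer multiple of g
  have hgen : ∀ x : H, x ∈ primaryPart H p → ∃ t : ℤ, t • g = x := by
    intro x hx
    have := hg0 ⟨x, hx⟩
    rw [AddSubgroup.mem_zmultiples_iff] at this
    obtain ⟨t, ht⟩ := this
    exact ⟨t, by rw [hg, ← AddSubgroup.coe_zsmul, ht]⟩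
  -- decomposition of the group order
  have hN0 : Nat.card H ≠ 0 := Nat.card_pos.ne'
  set N : ℕ := Nat.card H with hNdef
  set e : ℕ := N.factorization p with hedef
  set q : ℕ := N / p ^ e with hqdef
  have hNe : p ^ e * q = N := Nat.ordProj_mul_ordCompl_eq_self N p
  have hpq : ¬ p ∣ q := Nat.not_dvd_ordCompl hp hN0
  have hcop : IsCoprime (p : ℤ) (q : ℤ) := by
    rw [Int.isCoprime_iff_gcd_eq_one]
    exact_mod_cast (Nat.Prime.coprime_iff_not_dvd hp).mpr hpq
  have hNb : ∀ b : H, N • b = 0 := fun b => card_nsmul_eq_zero'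
  -- an element of QZ killed by coprime integers is zero
  have hkill : ∀ (a b : ℤ), IsCoprime a b → ∀ z : QZ, a • z = 0 → b • z = 0 → z = 0 := by
    intro a b hab z ha hb
    obtain ⟨u, v, huv⟩ := hab
    calc z = ((u * a + v * b) : ℤ) • z := by rw [huv, one_smul]
    _ = u • (a • z) + v • (b • z) := by rw [add_smul, mul_smul, mul_smul]
    _ = 0 := by rw [ha, hb, smul_zero, smul_zero, add_zero]
  -- claim: p^(n-1) • c ≠ 0
  have hc' : (p ^ (n - 1) : ℕ) • c ≠ 0 := by
    intro hzero
    set x : H := p ^ (n - 1) • g with hxdef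
    have hxne : x ≠ 0 := Nat.find_min hmem (by omega)
    apply hxne
    apply lf.adjoint_injective
    intro b
    -- p • x = 0
    have hpx : p • x = 0 := by
      rw [hxdef, ← mul_smul, ← pow_succ']
      have hh : n - 1 + 1 = n := by omega
      rw [hh]; exact hng
    -- decompose b = z + w
    obtain ⟨u, v, huv⟩ := (hcop.pow_left : IsCoprime ((p : ℤ) ^ e) (q : ℤ))
    set z : H := (u * (p : ℤ) ^ e) • b with hzdef
    set w : H := (v * (q : ℤ)) • b with hwdef
    have hbzw : z + w = b := by
      rw [hzdef, hwdef, ← add_smul, huv, one_smul]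
    have hqz : (q : ℤ) • z = 0 := by
      rw [hzdef, ← mul_smul]
      have : (q : ℤ) * (u * (p : ℤ) ^ e) = u * ((p ^ e * q : ℕ) : ℤ) := by push_cast; ring
      rw [this, hNe, mul_smul, natCast_zsmul, hNb, smul_zero]
    have hpw : ((p : ℤ) ^ e) • w = 0 := by
      rw [hwdef, ← mul_smul]
      have : (p : ℤ) ^ e * (v * (q : ℤ)) = v * ((p ^ e * q : ℕ) : ℤ) := by push_cast; ring
      rw [this, hNe, mul_smul, natCast_zsmul, hNb, smul_zero]
    have hwmem : w ∈ primaryPart H p := by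
      refine ⟨e, ?_⟩
      have : ((p ^ e : ℕ) : ℤ) • w = 0 := by push_cast; exact hpw
      rwa [natCast_zsmul] at this
    -- form x z = 0
    have hz0 : lf.form x z = 0 := by
      apply hkill (p : ℤ) (q : ℤ) hcop
      · rw [← form_zsmul_left, natCast_zsmul, hpx, form_zero_left]
      · rw [← form_zsmul_right, hqz]
        rw [lf.symm]; exact form_zero_left x
    -- form x w = 0
    have hw0 : lf.form x w = 0 := by
      obtain ⟨t, ht⟩ := hgen w hwmem
      rw [← ht, form_zsmul_right, hxdef, form_nsmul_left, hzero, smul_zero]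
    rw [← hbzw, lf.add_right, hz0, hw0, add_zero]
  -- Φ preserves the p-primary part, so Φ g = t • g
  have hΦg : Φ g ∈ primaryPart H p := by
    refine ⟨n, ?_⟩
    rw [← map_nsmul, hng, map_zero]
  obtain ⟨t, ht⟩ := hgen (Φ g) hΦg
  -- (t² + 1) • c = 0
  have hkey : (t * t + 1) • c = 0 := by
    have h1 : lf.form (Φ g) (Φ g) = (t * t) • c := by
      rw [← ht, form_zsmul_left, form_zsmul_right, hcdef, mul_smul]
    have h2 := hΦ g g
    rw [h1, ← hcdef] at h2
    rw [add_smul, one_smul, h2, neg_add_cancel]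
  -- p ∣ t² + 1
  have hdvd : (p : ℤ) ∣ t * t + 1 := by
    by_contra hnd
    have hcop2 : IsCoprime ((p : ℤ) ^ n) (t * t + 1) :=
      (((Nat.prime_iff_prime_int.mp hp).coprime_iff_not_dvd).mpr hnd).pow_left
    have hc0 : c = 0 := by
      apply hkill _ _ hcop2 c _ hkey
      have : ((p ^ n : ℕ) : ℤ) • c = 0 := by rw [natCast_zsmul]; exact hc
      rwa [Nat.cast_pow] at this
    exact hc' (by rw [hc0, smul_zero])
  -- contradiction with p ≡ 3 mod 4
  have hsq : IsSquare (-1 : ZMod p) := by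
    refine ⟨(t : ZMod p), ?_⟩
    have : ((t * t + 1 : ℤ) : ZMod p) = 0 := (ZMod.intCast_zmod_eq_zero_iff_dvd _ _).mpr hdvd
    push_cast at this
    linear_combination -this
  exact (ZMod.exists_sq_eq_neg_one_iff.mp hsq) hp4
end

section
/- Let p be a prime with p ≡ 3 mod 4, n ≥ 1, and k an integer coprime to p. Then there is no group automorphism Φ of ℤ/p^n such that (k/p^n)·Φ(a)·Φ(b) = -(k/p^n)·a·b in ℚ/ℤ for all a, b ∈ ℤ/p^n. -/
/-- for `p ≡ 3 mod 4` prime, `n ≥ 1` and `k` coprime to `p`, there is no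
automorphism of `ℤ/pⁿ` carrying the pairing `(k/pⁿ)·a·b` to its negative. -/
theorem no_anti_isometry_three_mod_four (p n : ℕ) (hp : p.Prime) (hp4 : p % 4 = 3)
    (hn : 1 ≤ n) (k : ℤ) (hk : IsCoprime k (p : ℤ)) :
    ¬ ∃ Φ : ZMod (p ^ n) ≃+ ZMod (p ^ n),
      ∀ a b : ZMod (p ^ n),
        stdPairing p n k (Φ a) (Φ b) = - stdPairing p n k a b := by
  rintro ⟨Φ, hΦ⟩
  haveI : Fact (1 < p ^ n) := ⟨Nat.one_lt_pow (by omega) hp.one_lt⟩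
  have h := hΦ 1 1
  set R : ℕ := (Φ 1).val with hR
  have h1 : (1 : ZMod (p ^ n)).val = 1 := ZMod.val_one _
  rw [eq_neg_iff_add_eq_zero] at h
  have hcoe : stdPairing p n k (Φ 1) (Φ 1) + stdPairing p n k 1 1
      = ((((k : ℚ) * ((R : ℚ) * R + 1)) / (p : ℚ) ^ n : ℚ) : QZ) := by
    unfold stdPairing
    rw [← QuotientAddGroup.mk_add]
    congr 1
    rw [h1]
    push_cast
    rw [← add_div, ← hR]
    ring_nf
  rw [hcoe, AddCircle.coe_eq_zero_iff] at h
  obtain ⟨m, hm⟩ := h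
  have hpn : ((p : ℚ) ^ n) ≠ 0 := pow_ne_zero _ (by exact_mod_cast hp.pos.ne')
  rw [zsmul_eq_mul, mul_one] at hm
  have hZ : (k * ((R : ℤ) * R + 1)) = m * (p : ℤ) ^ n := by
    have h2 : ((k : ℚ) * ((R : ℚ) * R + 1)) = m * (p : ℚ) ^ n := (div_eq_iff hpn).mp hm.symm
    exact_mod_cast h2
  have hpprime : Prime ((p : ℤ)) := Nat.prime_iff_prime_int.mp hp
  have hdvd : (p : ℤ) ∣ k * ((R : ℤ) * R + 1) := by
    rw [hZ]
    exact Dvd.dvd.mul_left (dvd_pow_self _ (by omega)) m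
  have hnk : ¬ (p : ℤ) ∣ k := fun hd => hpprime.not_unit (hk.isUnit_of_dvd' hd dvd_rfl)
  have hdvd2 : (p : ℤ) ∣ ((R : ℤ) * R + 1) := (hpprime.dvd_mul.mp hdvd).resolve_left hnk
  haveI : Fact p.Prime := ⟨hp⟩
  have hsq : IsSquare (-1 : ZMod p) := by
    refine ⟨(R : ZMod p), ?_⟩
    have : (((R : ℤ) * R + 1 : ℤ) : ZMod p) = 0 :=
      (ZMod.intCast_zmod_eq_zero_iff_dvd _ _).mpr hdvd2
    push_cast at this
    linear_combination -this
  rw [ZMod.exists_sq_eq_neg_one_iff] at hsq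
  exact hsq hp4
end

section
/- Let H be a finite cyclic group of order p^n (p an odd prime, n ≥ 1) with a linking form λ. If (H, λ) is isometric to (H, -λ), then -1 is a quadratic residue modulo p. -/
/-- if `ℤ/pⁿ` (`p` an odd prime, `n ≥ 1`) carries a linking form `λ` and
`(H, λ)` is isometric to `(H, -λ)`, then `-1` is a quadratic residue modulo `p`. -/
theorem neg_one_square_of_cyclic_anti_isometry (p n : ℕ) (hp : p.Prime) (hodd : Odd p)
    (hn : 1 ≤ n) (lf : LinkingForm (ZMod (p ^ n))) (Φ : ZMod (p ^ n) ≃+ ZMod (p ^ n))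
    (hΦ : ∀ a b : ZMod (p ^ n), lf.form (Φ a) (Φ b) = - lf.form a b) :
    ∃ r : ℤ, Int.ModEq (p : ℤ) (r ^ 2) (-1) := by
  haveI : NeZero (p ^ n) := ⟨pow_ne_zero n hp.ne_zero⟩
  have hsm : ∀ (a b : ZMod (p ^ n)) (m : ℕ), lf.form a (m • b) = m • lf.form a b := by
    intro a b m
    exact (AddMonoidHom.mk' (lf.form a) (lf.add_right a)).map_nsmul m b
  have hsml : ∀ (a b : ZMod (p ^ n)) (m : ℕ), lf.form (m • a) b = m • lf.form a b := by
    intro a b m; rw [lf.symm, hsm, lf.symm]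
  have hx : ∀ x : ZMod (p ^ n), x.val • (1 : ZMod (p ^ n)) = x := by
    intro x
    rw [nsmul_eq_mul, mul_one]
    simp [ZMod.natCast_val, ZMod.cast_id]
  set u := Φ 1 with hu
  have huu : lf.form u u = - lf.form 1 1 := hΦ 1 1
  have hvv : (u.val * u.val) • lf.form 1 1 = - lf.form 1 1 := by
    rw [mul_smul, ← hsm, ← hsml, hx]; exact huu
  have hkill : ((u.val * u.val + 1 : ℕ) • (1 : ZMod (p ^ n))) = 0 := by
    apply lf.adjoint_injective
    intro b
    rw [lf.symm, ← hx b, hsm, hsml]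
    rw [smul_comm (u.val * u.val + 1 : ℕ) b.val]
    rw [add_nsmul, one_nsmul, hvv, neg_add_cancel, smul_zero]
  have hcast : ((u.val * u.val + 1 : ℕ) : ZMod (p ^ n)) = 0 := by
    rw [← hkill, nsmul_eq_mul, mul_one]
  have hdvdN : p ^ n ∣ u.val * u.val + 1 := (ZMod.natCast_eq_zero_iff _ _).mp hcast
  have hdvdp : p ∣ u.val * u.val + 1 :=
    dvd_trans (dvd_pow_self p (by omega : n ≠ 0)) hdvdN
  refine ⟨(u.val : ℤ), ?_⟩
  have hd : (p : ℤ) ∣ ((u.val : ℤ) * (u.val : ℤ) + 1) := by exact_mod_cast hdvdp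
  rw [Int.modEq_iff_dvd]
  have heq : (-1 : ℤ) - (u.val : ℤ) ^ 2 = -((u.val : ℤ) * (u.val : ℤ) + 1) := by ring
  rw [heq]
  exact dvd_neg.mpr hd
end
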